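/- Let $z$ take values in $\{1,2\}$ and $y$ in $\{1,2,3\}$, with respondents' outcome probabilities $p_1(1\mid 1)=p_1(2\mid 2)=0.4$, $p_1(1\mid 2)=p_1(2\mid 1)=0.2$, and $p_1(3\mid 1)=p_1(3\mid 2)=0.4$. Consider the two response mechanisms (i) $\pi(1)=\pi(2)=\pi(3)=1/2$ and (ii) $\pi'(1)=\pi'(2)=2/3$, $\pi'(3)=4/11$. Then for each $z \in \{1,2\}$, $\sum_{y=1}^{3} p_1(y\mid z)/\pi(y) = \sum_{y=1}^{3} p_1(y\mid z)/\pi'(y) = 2$, so the two distinct models produce the same observed-data likelihood. -/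

import Mathlib

/-- Example: a binary instrument `z ∈ {1,2}` and ternary outcome `y ∈ {1,2,3}` with
the displayed respondents' outcome probabilities, together with the two response
mechanisms `π = (1/2,1/2,1/2)` and `π' = (2/3,2/3,4/11)`, give the same observed-data
likelihood: both normalizing sums equal `2` for each value of `z`, yet `π ≠ π'`. -/
theorem categorical_counterexample :
    let p : Fin 3 → Fin 2 → ℝ := ![![0.4, 0.2], ![0.2, 0.4], ![0.4, 0.4]]
    let π : Fin 3 → ℝ := ![1/2, 1/2, 1/2]
    let π' : Fin 3 → ℝ := ![2/3, 2/3, 4/11]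
    π ≠ π' ∧
      ∀ z : Fin 2, (∑ y, p y z / π y = 2) ∧ (∑ y, p y z / π' y = 2) := by
  refine ⟨fun h => ?_, ?_⟩
  · have := congrFun h 0
    simp [Matrix.cons_val_zero] at this
    norm_num at this
  · intro z
    fin_cases z <;> constructor <;>
      norm_num [Fin.sum_univ_three, Matrix.cons_val_zero, Matrix.cons_val_one, Matrix.cons_val_two, Matrix.head_cons, Matrix.vecHead, Matrix.vecTail]
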